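/- Let n, r, s be integers with 0 ≤ r < s and r + s ≤ n. Let p = (p₀, …, p_n) ∈ ℂ^{n+1} satisfy ∑_{i=0}^{r} |p_i|² = ∑_{j=r+1}^{r+s} |p_j|² and p¹ := (p₀, …, p_r) ≠ 0. Then there exist a complex (r+1)×s matrix A₁ with A₁·A₁* = I_{r+1} and a complex (r+1)×(n−r−s) matrix A₂ such that (p_{r+1}, …, p_{r+s}) = p¹·A₁ and (p_{r+s+1}, …, p_n) = p¹·A₂. Consequently p lies in the (r+1)-dimensional complex linear subspace W = {(z, z·A₁, z·A₂) : z ∈ ℂ^{r+1}}, every vector w of which satisfies ∑_{i=0}^{r} |w_i|² = ∑_{j=r+1}^{r+s} |w_j|². -/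

import Mathlib

open Matrix

section Helpers

lemma sum_fin_shift {n : ℕ} (a b : ℕ) (hab : a + b ≤ n + 1) (f : Fin (n+1) → ℝ) :
    (∑ i : Fin (n+1), if a ≤ (i : ℕ) ∧ (i : ℕ) < a + b then f i else 0) =
      ∑ j : Fin b, f ⟨a + (j : ℕ), by omega⟩ := by
  rw [← Finset.sum_filter]
  refine Finset.sum_bij' (fun (i : Fin (n+1)) (hi : i ∈ Finset.univ.filter
      (fun i : Fin (n+1) => a ≤ (i : ℕ) ∧ (i : ℕ) < a + b)) =>
      (⟨(i : ℕ) - a, by simp only [Finset.mem_filter] at hi; omega⟩ : Fin b))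
    (fun (j : Fin b) _ => (⟨a + (j : ℕ), by omega⟩ : Fin (n+1))) ?_ ?_ ?_ ?_ ?_
  · intro i hi; exact Finset.mem_univ _
  · intro j hj
    simp only [Finset.mem_filter, Finset.mem_univ, true_and]
    exact ⟨by omega, by have := j.isLt; omega⟩
  · intro i hi
    simp only [Finset.mem_filter, Finset.mem_univ, true_and] at hi
    apply Fin.ext; simp; omega
  · intro j hj
    apply Fin.ext; simp
  · intro i hi
    simp only [Finset.mem_filter, Finset.mem_univ, true_and] at hi
    congr 1
    apply Fin.ext; simp; omega

lemma sum_first {n r : ℕ} (hr : r + 1 ≤ n + 1) (w : Fin (n+1) → ℂ) :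
    (∑ i : Fin (n+1), if (i : ℕ) ≤ r then ‖w i‖ ^ 2 else 0) =
      ∑ j : Fin (r+1), ‖w ⟨(j : ℕ), by omega⟩‖ ^ 2 := by
  have h := sum_fin_shift (n := n) 0 (r+1) (by omega) (fun i => ‖w i‖ ^ 2)
  have h1 : (∑ i : Fin (n+1), if (i : ℕ) ≤ r then ‖w i‖ ^ 2 else 0) =
      ∑ i : Fin (n+1), if 0 ≤ (i : ℕ) ∧ (i : ℕ) < 0 + (r+1) then ‖w i‖ ^ 2 else 0 := by
    apply Finset.sum_congr rfl
    intro i _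
    exact if_congr (by omega) rfl rfl
  rw [h1, h]
  apply Finset.sum_congr rfl
  intro j _
  have he : ∀ (j : Fin (r+1)) (h1 : 0 + (j:ℕ) < n + 1) (h2 : (j:ℕ) < n + 1),
      (⟨0 + (j:ℕ), h1⟩ : Fin (n+1)) = ⟨(j:ℕ), h2⟩ := fun j h1 h2 => Fin.ext (zero_add _)
  rw [he j (by omega) (by omega)]

lemma sum_second {n r s : ℕ} (h' : r + 1 + s ≤ n + 1) (w : Fin (n+1) → ℂ) :
    (∑ i : Fin (n+1), if r < (i : ℕ) ∧ (i : ℕ) ≤ r + s then ‖w i‖ ^ 2 else 0) =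
      ∑ j : Fin s, ‖w ⟨r + 1 + (j : ℕ), by omega⟩‖ ^ 2 := by
  have h := sum_fin_shift (n := n) (r+1) s (by omega) (fun i => ‖w i‖ ^ 2)
  have h1 : (∑ i : Fin (n+1), if r < (i : ℕ) ∧ (i : ℕ) ≤ r + s then ‖w i‖ ^ 2 else 0) =
      ∑ i : Fin (n+1), if r + 1 ≤ (i : ℕ) ∧ (i : ℕ) < r + 1 + s then ‖w i‖ ^ 2 else 0 := by
    apply Finset.sum_congr rfl
    intro i _
    exact if_congr (by omega) rfl rfl
  rw [h1, h]

lemma isom_sum {m k : ℕ} (A : Matrix (Fin m) (Fin k) ℂ) (hA : A * Aᴴ = 1) (z : Fin m → ℂ) :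
    ∑ j, ‖Matrix.vecMul z A j‖^2 = ∑ i, ‖z i‖^2 := by
  apply Complex.ofReal_injective
  push_cast
  calc (∑ j, (‖Matrix.vecMul z A j‖ : ℂ)^2)
      = ∑ j, Matrix.vecMul z A j * (starRingEnd ℂ) (Matrix.vecMul z A j) := by
        simp [Complex.mul_conj']
    _ = ∑ j, ∑ i, ∑ i', (z i * A i j) * ((starRingEnd ℂ) (z i') * (starRingEnd ℂ) (A i' j)) := by
        apply Finset.sum_congr rfl; intro j _
        have h : Matrix.vecMul z A j = ∑ i, z i * A i j := rfl
        rw [h, map_sum, Finset.sum_mul_sum]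
        simp [_root_.map_mul]
    _ = ∑ i, ∑ i', (z i * (starRingEnd ℂ) (z i')) * ∑ j, A i j * (starRingEnd ℂ) (A i' j) := by
        rw [Finset.sum_comm]
        apply Finset.sum_congr rfl; intro i _
        rw [Finset.sum_comm]
        apply Finset.sum_congr rfl; intro i' _
        rw [Finset.mul_sum]
        apply Finset.sum_congr rfl; intro j _
        ring
    _ = ∑ i, ∑ i', (z i * (starRingEnd ℂ) (z i')) * (1 : Matrix (Fin m) (Fin m) ℂ) i i' := by
        apply Finset.sum_congr rfl; intro i _
        apply Finset.sum_congr rfl; intro i' _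
        congr 1
        rw [← hA]
        simp [Matrix.mul_apply, Matrix.conjTranspose_apply]
    _ = ∑ i, (‖z i‖ : ℂ)^2 := by
        apply Finset.sum_congr rfl; intro i _
        rw [Finset.sum_eq_single i]
        · simp [Complex.mul_conj']
        · intro b _ hb; simp [Matrix.one_apply, hb.symm]
        · simp

lemma exists_onb_first {N : ℕ} [NeZero N] (x : EuclideanSpace ℂ (Fin N)) (hx : x ≠ 0) :
    ∃ d : OrthonormalBasis (Fin N) ℂ (EuclideanSpace ℂ (Fin N)),
      d 0 = ((‖x‖ : ℂ))⁻¹ • x := by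
  classical
  have hv : Orthonormal ℂ (Set.restrict ({0} : Set (Fin N))
      (fun _ : Fin N => ((‖x‖ : ℂ))⁻¹ • x)) := by
    rw [orthonormal_iff_ite]
    intro i j
    cases Subsingleton.elim i j
    simp only [Set.restrict_apply]
    simp only [if_true]
    have hn : ‖x‖ ≠ 0 := norm_ne_zero_iff.mpr hx
    rw [inner_self_eq_norm_sq_to_K]
    change ((‖((‖x‖ : ℂ))⁻¹ • x‖ : ℝ) : ℂ) ^ 2 = 1
    rw [norm_smul, norm_inv]
    rw [Complex.norm_real, Real.norm_eq_abs, abs_of_nonneg (norm_nonneg x), inv_mul_cancel₀ hn]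
    norm_num
  obtain ⟨d, hd⟩ := hv.exists_orthonormalBasis_extension_of_card_eq
    (by simp [finrank_euclideanSpace_fin])
  exact ⟨d, hd 0 rfl⟩

lemma row_orthonormal {N : ℕ} (d : OrthonormalBasis (Fin N) ℂ (EuclideanSpace ℂ (Fin N))) :
    (Matrix.of (fun t i => d t i)) * (Matrix.of (fun t i => d t i))ᴴ = 1 := by
  ext t u
  rw [Matrix.mul_apply, Matrix.one_apply]
  have h := orthonormal_iff_ite.mp d.orthonormal u t
  rw [PiLp.inner_apply] at h
  simp only [RCLike.inner_apply] at h
  calc ∑ i, (Matrix.of (fun t i => d t i)) t i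
        * (Matrix.of (fun t i => d t i))ᴴ i u
      = ∑ i, (starRingEnd ℂ) (d u i) * d t i := by
        apply Finset.sum_congr rfl; intro i _
        simp only [Matrix.conjTranspose_apply, Matrix.of_apply]
        rw [mul_comm]; rfl
    _ = if u = t then 1 else 0 := by rw [← h]; exact Finset.sum_congr rfl (fun i _ => mul_comm _ _)
    _ = if t = u then 1 else 0 := by simp [eq_comm]

lemma exists_isometry_matrix {m k : ℕ} (hmk : m + 1 ≤ k) (a : Fin (m+1) → ℂ) (b : Fin k → ℂ)
    (ha : a ≠ 0) (hab : ∑ i, ‖a i‖^2 = ∑ j, ‖b j‖^2) :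
    ∃ A : Matrix (Fin (m+1)) (Fin k) ℂ, A * Aᴴ = 1 ∧ Matrix.vecMul a A = b := by
  classical
  haveI : NeZero k := ⟨by omega⟩
  set a' : EuclideanSpace ℂ (Fin (m+1)) := WithLp.toLp 2 a with ha'
  set b' : EuclideanSpace ℂ (Fin k) := WithLp.toLp 2 b with hb'
  have ha0 : a' ≠ 0 := by
    intro h; apply ha; have := congrArg (WithLp.ofLp (p := 2)) h; simpa [ha'] using this
  have hna : ‖a'‖ ≠ 0 := norm_ne_zero_iff.mpr ha0
  have hnab : ‖a'‖ = ‖b'‖ := by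
    rw [EuclideanSpace.norm_eq, EuclideanSpace.norm_eq]
    exact congrArg Real.sqrt hab
  have hnb : b' ≠ 0 := by
    intro h
    apply hna
    rw [hnab, h, norm_zero]
  obtain ⟨bb, hbb⟩ := exists_onb_first a' ha0
  obtain ⟨cc, hcc⟩ := exists_onb_first b' hnb
  set B : Matrix (Fin (m+1)) (Fin (m+1)) ℂ := Matrix.of (fun t i => bb t i) with hBdef
  set C : Matrix (Fin k) (Fin k) ℂ := Matrix.of (fun t j => cc t j) with hCdef
  set J : Matrix (Fin (m+1)) (Fin k) ℂ :=
    Matrix.of (fun t j => if Fin.castLE hmk t = j then 1 else 0) with hJdef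
  have hB : B * Bᴴ = 1 := row_orthonormal bb
  have hC : C * Cᴴ = 1 := row_orthonormal cc
  have hBB : Bᴴ * B = 1 := mul_eq_one_comm.mp hB
  have hJ : J * Jᴴ = 1 := by
    ext t u
    rw [Matrix.mul_apply, Matrix.one_apply]
    simp only [hJdef, Matrix.conjTranspose_apply, Matrix.of_apply]
    rw [Finset.sum_eq_single (Fin.castLE hmk t)]
    · rw [if_pos rfl, one_mul]
      by_cases h : t = u
      · subst h; simp
      · rw [if_neg h,
          if_neg (fun hc : Fin.castLE hmk u = Fin.castLE hmk t =>
            h (Fin.castLE_injective hmk hc).symm)]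
        simp
    · intro j _ hj
      rw [if_neg (fun hc => hj hc.symm), zero_mul]
    · simp
  refine ⟨Bᴴ * (J * C), ?_, ?_⟩
  · rw [Matrix.conjTranspose_mul, Matrix.conjTranspose_mul, Matrix.conjTranspose_conjTranspose]
    calc Bᴴ * (J * C) * (Cᴴ * Jᴴ * B)
        = Bᴴ * (J * (C * Cᴴ) * Jᴴ * B) := by
          simp only [Matrix.mul_assoc]
      _ = 1 := by rw [hC, Matrix.mul_one, hJ, Matrix.one_mul, hBB]
  · have hca : (‖a'‖ : ℂ) ≠ 0 := by exact_mod_cast hna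
    have haeq : a = fun i => (‖a'‖ : ℂ) * bb 0 i := by
      funext i
      rw [hbb]
      simp only [PiLp.smul_apply, smul_eq_mul]
      rw [← mul_assoc, mul_inv_cancel₀ hca, one_mul]
    rw [← Matrix.vecMul_vecMul, ← Matrix.vecMul_vecMul]
    have step1 : Matrix.vecMul a Bᴴ = Pi.single 0 (‖a'‖ : ℂ) := by
      funext u
      rw [Matrix.vecMul, Pi.single_apply]
      simp only [dotProduct, Matrix.conjTranspose_apply, hBdef, Matrix.of_apply]
      rw [haeq]
      have h := orthonormal_iff_ite.mp bb.orthonormal u 0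
      rw [PiLp.inner_apply] at h
      simp only [RCLike.inner_apply] at h
      calc ∑ i, (‖a'‖ : ℂ) * bb 0 i * (starRingEnd ℂ) (bb u i)
          = (‖a'‖ : ℂ) * ∑ i, (starRingEnd ℂ) (bb u i) * bb 0 i := by
            rw [Finset.mul_sum]; apply Finset.sum_congr rfl; intro i _; ring
        _ = (‖a'‖ : ℂ) * (if u = 0 then 1 else 0) := by
            rw [← h]; congr 1; exact Finset.sum_congr rfl (fun i _ => mul_comm _ _)
        _ = if u = 0 then (‖a'‖ : ℂ) else 0 := by split <;> simp
    rw [step1]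
    have step2 : Matrix.vecMul (Pi.single (0 : Fin (m+1)) (‖a'‖ : ℂ)) J
        = Pi.single (0 : Fin k) (‖a'‖ : ℂ) := by
      funext j
      rw [Matrix.vecMul, Pi.single_apply]
      simp only [dotProduct, hJdef, Matrix.of_apply]
      rw [Finset.sum_eq_single (0 : Fin (m+1))]
      · rw [Pi.single_eq_same]
        have h0 : Fin.castLE hmk (0 : Fin (m+1)) = (0 : Fin k) := rfl
        rw [h0]
        by_cases h : j = 0
        · subst h; simp
        · rw [if_neg (fun hc => h hc.symm), if_neg h, mul_zero]
      · intro t _ ht; rw [Pi.single_eq_of_ne ht, zero_mul]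
      · simp
    rw [step2]
    funext j
    rw [Matrix.vecMul]
    simp only [dotProduct, hCdef, Matrix.of_apply]
    rw [Finset.sum_eq_single (0 : Fin k)]
    · rw [Pi.single_eq_same, hcc]
      simp only [PiLp.smul_apply, smul_eq_mul]
      rw [← hnab, ← mul_assoc, mul_inv_cancel₀ hca, one_mul]
    · intro t _ ht; rw [Pi.single_eq_of_ne ht, zero_mul]
    · simp

end Helpers

/-- The vector `(z, z·A₁, z·A₂) ∈ ℂ^{n+1}`, where `z ∈ ℂ^{r+1}`,
`A₁` is a complex `(r+1)×s` matrix and `A₂` is a complex `(r+1)×(n-r-s)` matrix. -/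
noncomputable def genBallGraphVec (n r s : ℕ) (A₁ : Matrix (Fin (r + 1)) (Fin s) ℂ)
    (A₂ : Matrix (Fin (r + 1)) (Fin (n - r - s)) ℂ) (z : Fin (r + 1) → ℂ) :
    Fin (n + 1) → ℂ :=
  fun i =>
    if h1 : (i : ℕ) ≤ r then z ⟨(i : ℕ), by omega⟩
    else if h2 : (i : ℕ) ≤ r + s then Matrix.vecMul z A₁ ⟨(i : ℕ) - (r + 1), by omega⟩
    else Matrix.vecMul z A₂ ⟨(i : ℕ) - (r + s + 1), by have := i.isLt; omega⟩

/-- `genBallGraphVec` as a linear map in `z`. -/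
noncomputable def genBallGraphLin (n r s : ℕ) (A₁ : Matrix (Fin (r + 1)) (Fin s) ℂ)
    (A₂ : Matrix (Fin (r + 1)) (Fin (n - r - s)) ℂ) :
    (Fin (r + 1) → ℂ) →ₗ[ℂ] (Fin (n + 1) → ℂ) where
  toFun z := genBallGraphVec n r s A₁ A₂ z
  map_add' z w := by
    funext i
    simp only [genBallGraphVec, Pi.add_apply, Matrix.add_vecMul]
    split_ifs <;> simp
  map_smul' c z := by
    funext i
    simp only [genBallGraphVec, Pi.smul_apply, RingHom.id_apply, Matrix.vecMul_smul,
      smul_eq_mul]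
    split_ifs <;> simp [Matrix.smul_vecMul]

theorem stmt_14 (n r s : ℕ) (hrs : r < s) (hrsn : r + s ≤ n)
    (p : Fin (n + 1) → ℂ)
    (hpeq : (∑ i : Fin (n + 1), if (i : ℕ) ≤ r then ‖p i‖ ^ 2 else 0) =
      ∑ i : Fin (n + 1), if r < (i : ℕ) ∧ (i : ℕ) ≤ r + s then ‖p i‖ ^ 2 else 0)
    (hp1 : (fun i : Fin (r + 1) => p ⟨(i : ℕ), by have := i.isLt; omega⟩) ≠ 0) :
    ∃ (A₁ : Matrix (Fin (r + 1)) (Fin s) ℂ)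
      (A₂ : Matrix (Fin (r + 1)) (Fin (n - r - s)) ℂ),
      A₁ * A₁ᴴ = 1 ∧
      p = genBallGraphVec n r s A₁ A₂
        (fun i : Fin (r + 1) => p ⟨(i : ℕ), by have := i.isLt; omega⟩) ∧
      ∃ W : Submodule ℂ (Fin (n + 1) → ℂ),
        (W : Set (Fin (n + 1) → ℂ)) =
          {w | ∃ z : Fin (r + 1) → ℂ, w = genBallGraphVec n r s A₁ A₂ z} ∧
        Module.finrank ℂ W = r + 1 ∧ p ∈ W ∧
        ∀ w ∈ W, (∑ i : Fin (n + 1), if (i : ℕ) ≤ r then ‖w i‖ ^ 2 else 0) =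
          ∑ i : Fin (n + 1), if r < (i : ℕ) ∧ (i : ℕ) ≤ r + s then ‖w i‖ ^ 2 else 0 := by
  classical
  set p₁ : Fin (r + 1) → ℂ := fun i : Fin (r + 1) => p ⟨(i : ℕ), by have := i.isLt; omega⟩
    with hp₁def
  set p₂ : Fin s → ℂ := fun j : Fin s => p ⟨r + 1 + (j : ℕ), by have := j.isLt; omega⟩
    with hp₂def
  -- norms agree
  have hab : ∑ i, ‖p₁ i‖ ^ 2 = ∑ j, ‖p₂ j‖ ^ 2 := by
    rw [← sum_first (by omega) p, ← sum_second (by omega) p]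
    exact hpeq
  -- construct A₁
  obtain ⟨A₁, hA₁, hA₁p⟩ := exists_isometry_matrix (m := r) (k := s) (by omega) p₁ p₂ hp1 hab
  -- construct A₂
  have hS : (0:ℝ) < ∑ i, ‖p₁ i‖ ^ 2 := by
    have : ∃ i, p₁ i ≠ 0 := by
      by_contra h
      push_neg at h
      exact hp1 (funext h)
    obtain ⟨i₀, hi₀⟩ := this
    apply Finset.sum_pos' (fun i _ => by positivity)
    refine ⟨i₀, Finset.mem_univ _, ?_⟩
    have hni : ‖p₁ i₀‖ ≠ 0 := norm_ne_zero_iff.mpr hi₀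
    positivity
  set S : ℝ := ∑ i, ‖p₁ i‖ ^ 2 with hSdef
  have hSc : ((S : ℂ)) ≠ 0 := by exact_mod_cast ne_of_gt hS
  set A₂ : Matrix (Fin (r + 1)) (Fin (n - r - s)) ℂ :=
    Matrix.of (fun i j => (starRingEnd ℂ) (p₁ i) / (S : ℂ)
      * p ⟨r + s + 1 + (j : ℕ), by have := j.isLt; omega⟩) with hA₂def
  have hA₂p : Matrix.vecMul p₁ A₂ =
      fun j : Fin (n - r - s) => p ⟨r + s + 1 + (j : ℕ), by have := j.isLt; omega⟩ := by
    funext j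
    rw [Matrix.vecMul]
    simp only [dotProduct, hA₂def, Matrix.of_apply]
    have key : ∑ i, p₁ i * ((starRingEnd ℂ) (p₁ i) / (S : ℂ)
        * p ⟨r + s + 1 + (j : ℕ), by have := j.isLt; omega⟩)
        = (∑ i, p₁ i * (starRingEnd ℂ) (p₁ i)) / (S : ℂ)
          * p ⟨r + s + 1 + (j : ℕ), by have := j.isLt; omega⟩ := by
      rw [Finset.sum_div, Finset.sum_mul]
      apply Finset.sum_congr rfl; intro i _; ring
    rw [key]
    have hsum : (∑ i, p₁ i * (starRingEnd ℂ) (p₁ i)) = (S : ℂ) := by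
      rw [hSdef]
      push_cast
      apply Finset.sum_congr rfl; intro i _
      exact Complex.mul_conj' _
    rw [hsum, div_self hSc, one_mul]
  -- p is the graph vector of p₁
  have hpg : p = genBallGraphVec n r s A₁ A₂ p₁ := by
    funext i
    simp only [genBallGraphVec]
    split_ifs with h1 h2
    · exact congrArg p (Fin.ext rfl)
    · rw [hA₁p]
      simp only [hp₂def]
      exact congrArg p (Fin.ext (by simp only [Fin.val_mk]; omega))
    · rw [hA₂p]
      refine congrArg p (Fin.ext ?_)
      simp
      omega
  -- the linear map and its range
  set φ := genBallGraphLin n r s A₁ A₂ with hφdef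
  have hφ : ∀ z, φ z = genBallGraphVec n r s A₁ A₂ z := fun _ => rfl
  have hφinj : Function.Injective φ := by
    intro z₁ z₂ h
    funext i
    have h' := congrFun h ⟨(i : ℕ), by have := i.isLt; omega⟩
    simp only [hφ, genBallGraphVec] at h'
    rw [dif_pos (by exact Nat.lt_succ_iff.mp i.isLt)] at h'
    rw [dif_pos (by exact Nat.lt_succ_iff.mp i.isLt)] at h'
    simpa using h'
  refine ⟨A₁, A₂, hA₁, hpg, LinearMap.range φ, ?_, ?_, ?_, ?_⟩
  · ext w
    simp only [SetLike.mem_coe, LinearMap.mem_range, Set.mem_setOf_eq]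
    constructor
    · rintro ⟨z, hz⟩; exact ⟨z, by rw [← hz, hφ]⟩
    · rintro ⟨z, hz⟩; exact ⟨z, by rw [hz, hφ]⟩
  · rw [LinearMap.finrank_range_of_inj hφinj, Module.finrank_fin_fun]
  · exact ⟨p₁, hpg.symm⟩
  · intro w hw
    obtain ⟨z, hz⟩ := hw
    have hwz : w = genBallGraphVec n r s A₁ A₂ z := by rw [← hz, hφ]
    have hfirst : ∀ j : Fin (r+1),
        w ⟨(j : ℕ), by have := j.isLt; omega⟩ = z j := by
      intro j
      rw [hwz]
      simp only [genBallGraphVec]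
      rw [dif_pos (by exact Nat.lt_succ_iff.mp j.isLt)]
    have hsecond : ∀ j : Fin s,
        w ⟨r + 1 + (j : ℕ), by have := j.isLt; omega⟩ = Matrix.vecMul z A₁ j := by
      intro j
      rw [hwz]
      simp only [genBallGraphVec]
      rw [dif_neg (by omega), dif_pos (by have := j.isLt; omega)]
      try exact congrArg (Matrix.vecMul z A₁) (Fin.ext (by simp only [Fin.val_mk]; omega))
    rw [sum_first (by omega) w, sum_second (by omega) w]
    calc ∑ j : Fin (r+1), ‖w ⟨(j : ℕ), by have := j.isLt; omega⟩‖ ^ 2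
        = ∑ j : Fin (r+1), ‖z j‖ ^ 2 := by
          apply Finset.sum_congr rfl; intro j _; rw [hfirst j]
      _ = ∑ j : Fin s, ‖Matrix.vecMul z A₁ j‖ ^ 2 := (isom_sum A₁ hA₁ z).symm
      _ = ∑ j : Fin s, ‖w ⟨r + 1 + (j : ℕ), by have := j.isLt; omega⟩‖ ^ 2 := by
          apply Finset.sum_congr rfl; intro j _; rw [hsecond j]
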